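/- arXiv:1109.3401 — 4 statements merged into one kernel-verified Lean document; each statement's English description precedes it below -/
import Mathlib

section
/- If a feasible routing for the conservative k-of-n max-throughput LP saturates every processor (i.e., ∑_T g(T,i)·z_T = r_i for all i), then it achieves the maximum throughput among all feasible routings. -/
open Finset

noncomputable def wt {n : ℕ} (p : Fin n → ℝ) (x : Fin n → Bool) : ℝ :=
  ∏ i, if x i then p i else 1 - p i

open scoped Classical in
/-- Probability of an event under the product Bernoulli distribution with parameters `p`. -/
noncomputable def pr {n : ℕ} (p : Fin n → ℝ) (E : (Fin n → Bool) → Prop) : ℝ :=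
  ∑ x ∈ Finset.univ.filter E, wt p x

/-- Number of zeros (failed tests) in an outcome vector. -/
def zeros {n : ℕ} (x : Fin n → Bool) : ℕ := ∑ i, if x i then 0 else 1

/-- Binary decision trees over `n` tests. -/
inductive DTree (n : ℕ) : Type
  | leaf (b : Bool) : DTree n
  | node (i : Fin n) (l r : DTree n) : DTree n

def DTree.eval {n : ℕ} : DTree n → (Fin n → Bool) → Bool
  | .leaf b, _ => b
  | .node i l r, x => if x i then DTree.eval r x else DTree.eval l x

/-- The set of tests performed on item `x` by strategy `T`. -/
def DTree.tests {n : ℕ} : DTree n → (Fin n → Bool) → Finset (Fin n)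
  | .leaf _, _ => ∅
  | .node i l r, x => insert i (if x i then DTree.tests r x else DTree.tests l x)

/-- The number of tests (path length) performed on item `x` by strategy `T`. -/
def DTree.depthOn {n : ℕ} : DTree n → (Fin n → Bool) → ℕ
  | .leaf _, _ => 0
  | .node i l r, x => (if x i then DTree.depthOn r x else DTree.depthOn l x) + 1

/-- `gprob p T i` : probability that test `i` is performed on a random item under strategy `T`. -/
noncomputable def gprob {n : ℕ} (p : Fin n → ℝ) (T : DTree n) (i : Fin n) : ℝ :=
  pr p (fun x => i ∈ T.tests x)

/-- A conservative `k`-of-`n` strategy: tests along each path are distinct, the strategy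
computes the `k`-of-`n` function, items with fewer than `k` zeros undergo all `n` tests,
and items with at least `k` zeros are tested exactly until `k` zeros are observed. -/
def Conservative {n : ℕ} (k : ℕ) (T : DTree n) : Prop :=
  (∀ x, T.depthOn x = (T.tests x).card) ∧
  (∀ x : Fin n → Bool, T.eval x = decide (zeros x < k)) ∧
  (∀ x, zeros x < k → T.tests x = Finset.univ) ∧
  (∀ x, k ≤ zeros x → ((T.tests x).filter (fun i => x i = false)).card = k)

lemma mem_tests_update {n : ℕ} (T : DTree n) (x : Fin n → Bool) (i : Fin n) (b : Bool) :
    i ∈ T.tests (Function.update x i b) ↔ i ∈ T.tests x := by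
  induction T generalizing x with
  | leaf => simp [DTree.tests]
  | node j l r ihl ihr =>
    by_cases hji : j = i
    · subst hji; simp [DTree.tests]
    · have hx : Function.update x i b j = x j := Function.update_of_ne hji _ _
      simp only [DTree.tests, Finset.mem_insert, hx]
      have hij : ¬ (i = j) := fun h => hji h.symm
      cases hxj : x j <;> simp [hxj, ihl, ihr, hij]

lemma wt_split {n : ℕ} (p : Fin n → ℝ) (x : Fin n → Bool) (i : Fin n) :
    wt p x = (if x i then p i else 1 - p i) *
      ∏ j ∈ Finset.univ.erase i, (if x j then p j else 1 - p j) := by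
  rw [wt, ← Finset.mul_prod_erase Finset.univ _ (Finset.mem_univ i)]

open scoped Classical in
lemma pr_and_false {n : ℕ} (p : Fin n → ℝ) (i : Fin n) (E : (Fin n → Bool) → Prop)
    (hE : ∀ x b, E (Function.update x i b) ↔ E x) :
    pr p (fun x => E x ∧ x i = false) = (1 - p i) * pr p E := by
  classical
  set C : (Fin n → Bool) → ℝ :=
    fun x => ∏ j ∈ Finset.univ.erase i, (if x j then p j else 1 - p j) with hC
  set A : Finset (Fin n → Bool) := Finset.univ.filter (fun x => E x ∧ x i = false) with hA
  set B : Finset (Fin n → Bool) := Finset.univ.filter (fun x => E x ∧ x i = true) with hB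
  have hsplit : pr p E = ∑ x ∈ A, wt p x + ∑ x ∈ B, wt p x := by
    rw [pr, ← Finset.sum_filter_add_sum_filter_not (Finset.univ.filter E) (fun x => x i = false)]
    congr 1
    · congr 1; rw [hA, Finset.filter_filter]
    · congr 1; rw [hB, Finset.filter_filter]
      apply Finset.filter_congr; intro x _; simp
  have hBA : ∑ x ∈ B, wt p x = ∑ x ∈ A, wt p (Function.update x i true) := by
    apply Finset.sum_nbij' (fun x => Function.update x i false)
      (fun x => Function.update x i true)
    · intro x hx
      rw [hB, Finset.mem_filter] at hx
      rw [hA, Finset.mem_filter]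
      exact ⟨Finset.mem_univ _, (hE x false).2 hx.2.1, by simp⟩
    · intro x hx
      rw [hA, Finset.mem_filter] at hx
      rw [hB, Finset.mem_filter]
      exact ⟨Finset.mem_univ _, (hE x true).2 hx.2.1, by simp⟩
    · intro x hx
      rw [hB, Finset.mem_filter] at hx
      funext j
      by_cases hj : j = i
      · subst hj; simp [hx.2.2]
      · simp [Function.update_of_ne hj]
    · intro x hx
      rw [hA, Finset.mem_filter] at hx
      funext j
      by_cases hj : j = i
      · subst hj; simp [hx.2.2]
      · simp [Function.update_of_ne hj]
    · intro x hx
      rw [hB, Finset.mem_filter] at hx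
      have : Function.update (Function.update x i false) i true = x := by
        funext j
        by_cases hj : j = i
        · subst hj; simp [hx.2.2]
        · simp [Function.update_of_ne hj]
      rw [this]
  have hCA : ∀ x ∈ A, wt p x = (1 - p i) * C x ∧ wt p (Function.update x i true) = p i * C x := by
    intro x hx
    rw [hA, Finset.mem_filter] at hx
    constructor
    · rw [wt_split p x i, hx.2.2]; simp [hC]
    · rw [wt_split p _ i]
      simp only [Function.update_self, if_true, hC]
      congr 1
      apply Finset.prod_congr rfl
      intro j hj
      rw [Function.update_of_ne (Finset.mem_erase.1 hj).1]
  have key : pr p E = ∑ x ∈ A, C x := by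
    rw [hsplit, hBA, ← Finset.sum_add_distrib]
    apply Finset.sum_congr rfl
    intro x hx
    rw [(hCA x hx).1, (hCA x hx).2]; ring
  have lhs : pr p (fun x => E x ∧ x i = false) = ∑ x ∈ A, wt p x := by
    rw [pr, hA]
    congr 1
    convert rfl using 2
  rw [lhs, key, Finset.mul_sum]
  apply Finset.sum_congr rfl
  intro x hx
  exact (hCA x hx).1

open scoped Classical in
lemma card_zero_tests {n k : ℕ} (T : DTree n) (hT : Conservative k T) (x : Fin n → Bool) :
    ((T.tests x).filter fun i => x i = false).card = min k (zeros x) := by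
  obtain ⟨-, -, h3, h4⟩ := hT
  rcases lt_or_ge (zeros x) k with h | h
  · rw [h3 x h, min_eq_right h.le, zeros, Finset.card_filter]
    apply Finset.sum_congr rfl
    intro i _
    cases hxi : x i <;> simp [hxi]
  · rw [h4 x h, min_eq_left h]

open scoped Classical in
lemma sum_gprob_mul {n k : ℕ} (p : Fin n → ℝ) (T : DTree n) (hT : Conservative k T) :
    ∑ i, gprob p T i * (1 - p i) = ∑ x : Fin n → Bool, wt p x * (min k (zeros x) : ℝ) := by
  have step1 : ∀ i : Fin n, gprob p T i * (1 - p i) =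
      ∑ x : Fin n → Bool, if i ∈ T.tests x ∧ x i = false then wt p x else 0 := by
    intro i
    rw [gprob, mul_comm, ← pr_and_false p i _ (fun x b => mem_tests_update T x i b), pr,
      Finset.sum_filter]
    apply Finset.sum_congr rfl
    intro x _
    convert rfl
  calc ∑ i, gprob p T i * (1 - p i)
      = ∑ i, ∑ x : Fin n → Bool, if i ∈ T.tests x ∧ x i = false then wt p x else 0 := by
        refine Finset.sum_congr rfl fun i _ => (step1 i).trans ?_
        apply Finset.sum_congr rfl
        intro x _
        convert rfl
    _ = ∑ x : Fin n → Bool, ∑ i, if i ∈ T.tests x ∧ x i = false then wt p x else 0 :=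
        Finset.sum_comm
    _ = ∑ x : Fin n → Bool, wt p x * (min k (zeros x) : ℝ) := by
        apply Finset.sum_congr rfl
        intro x _
        rw [← Finset.sum_filter, Finset.sum_const]
        have : Finset.univ.filter (fun i => i ∈ T.tests x ∧ x i = false) =
            (T.tests x).filter (fun i => x i = false) := by
          ext i; simp [Finset.mem_filter]
        rw [this, card_zero_tests T hT x, nsmul_eq_mul, mul_comm]
        push_cast
        ring

/-- Saturation implies optimality for the conservative k-of-n max-throughput LP. -/
theorem stmt_5 (n k : ℕ) (hk1 : 1 ≤ k) (hkn : k ≤ n)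
    (p r : Fin n → ℝ) (hp : ∀ i, 0 < p i ∧ p i < 1) (hr : ∀ i, 0 < r i)
    (S : Finset (DTree n)) (z : DTree n → ℝ)
    (hcons : ∀ T ∈ S, Conservative k T) (hz : ∀ T, 0 ≤ z T)
    (hsat : ∀ i, ∑ T ∈ S, gprob p T i * z T = r i) :
    ∀ (S' : Finset (DTree n)) (z' : DTree n → ℝ),
      (∀ T ∈ S', Conservative k T) → (∀ T, 0 ≤ z' T) →
      (∀ i, ∑ T ∈ S', gprob p T i * z' T ≤ r i) →
      ∑ T ∈ S', z' T ≤ ∑ T ∈ S, z T := by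
  classical
  set α : ℝ := ∑ x : Fin n → Bool, wt p x * (min k (zeros x) : ℝ) with hα
  have hwt : ∀ x : Fin n → Bool, 0 ≤ wt p x := by
    intro x
    apply Finset.prod_nonneg
    intro i _
    by_cases h : x i <;> simp [h] <;> linarith [(hp i).1, (hp i).2]
  have hαpos : 0 < α := by
    have hx0 : (0:ℝ) < wt p (fun _ : Fin n => false) * (min k (zeros (fun _ : Fin n => false)) : ℝ) := by
      have h1 : (0:ℝ) < wt p (fun _ : Fin n => false) := by
        apply Finset.prod_pos
        intro i _
        simp only [if_neg Bool.false_ne_true]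
        linarith [(hp i).2]
      have h2 : zeros (fun _ : Fin n => false) = n := by simp [zeros]
      have h2' : ((zeros (fun _ : Fin n => false) : ℕ) : ℝ) = (n : ℝ) := by rw [h2]
      rw [h2']
      have h3 : min (k:ℝ) (n:ℝ) = (k:ℝ) := min_eq_left (by exact_mod_cast hkn)
      rw [h3]
      have : (0:ℝ) < (k:ℝ) := by exact_mod_cast hk1
      positivity
    calc (0:ℝ) < wt p (fun _ : Fin n => false) * (min k (zeros (fun _ : Fin n => false)) : ℝ) := hx0
      _ ≤ α := by
        apply Finset.single_le_sum (f := fun x => wt p x * (min k (zeros x) : ℝ))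
          (fun x _ => mul_nonneg (hwt x) (le_min (Nat.cast_nonneg _) (Nat.cast_nonneg _)))
          (Finset.mem_univ _)
  have hswap : ∀ (S₀ : Finset (DTree n)) (z₀ : DTree n → ℝ), (∀ T ∈ S₀, Conservative k T) →
      ∑ i, (∑ T ∈ S₀, gprob p T i * z₀ T) * (1 - p i) = α * ∑ T ∈ S₀, z₀ T := by
    intro S₀ z₀ hc
    calc ∑ i, (∑ T ∈ S₀, gprob p T i * z₀ T) * (1 - p i)
        = ∑ i, ∑ T ∈ S₀, gprob p T i * (1 - p i) * z₀ T := by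
          refine Finset.sum_congr rfl fun i _ => ?_
          rw [Finset.sum_mul]
          exact Finset.sum_congr rfl fun T _ => by ring
      _ = ∑ T ∈ S₀, ∑ i, gprob p T i * (1 - p i) * z₀ T := Finset.sum_comm
      _ = ∑ T ∈ S₀, (∑ i, gprob p T i * (1 - p i)) * z₀ T := by
          exact Finset.sum_congr rfl fun T _ => (Finset.sum_mul _ _ _).symm
      _ = ∑ T ∈ S₀, α * z₀ T := by
          refine Finset.sum_congr rfl fun T hT => ?_
          rw [sum_gprob_mul p T (hc T hT), hα]
      _ = α * ∑ T ∈ S₀, z₀ T := (Finset.mul_sum _ _ _).symm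
  intro S' z' hc' hz' hfeas
  have h1 : α * ∑ T ∈ S', z' T ≤ ∑ i, r i * (1 - p i) := by
    rw [← hswap S' z' hc']
    refine Finset.sum_le_sum fun i _ => ?_
    exact mul_le_mul_of_nonneg_right (hfeas i) (by linarith [(hp i).2])
  have h2 : ∑ i, r i * (1 - p i) = α * ∑ T ∈ S, z T := by
    rw [← hswap S z hcons]
    exact Finset.sum_congr rfl fun i _ => by rw [hsat i]
  exact le_of_mul_le_mul_left (h1.trans_eq h2) hαpos
end

section
/- Let x_1,...,x_n be independent Bernoulli variables, q_i = 1-p_i, q_0 := q_n, and fix k ≥ 1. If t units of flow are distributed among the n cyclic shifts π_i = (i, i+1, ..., n, 1, ..., i-1), assigning fraction (1-p_{i-1})/∑_{j=1}^n (1-p_{j-1}) to the conservative strategy T_k(π_i), then the expected load on every processor is the same, namely t·α/∑_{j=1}^n (1-p_j), where α = ∑_{t'=1}^k P(∑_{ℓ=1}^n (1-x_ℓ) ≥ t'). -/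
open Finset

/-- The conservative strategy that performs the listed tests in order until `k` zeros
have been observed or the list is exhausted. -/
def permTree (n : ℕ) : ℕ → List (Fin n) → DTree n
  | 0, _ => .leaf false
  | _ + 1, [] => .leaf true
  | k + 1, i :: rest => .node i (permTree n k rest) (permTree n (k + 1) rest)

/-- The conservative `k`-of-`n` strategy following the order `π 0, π 1, …`. -/
def permStrat {n : ℕ} (k : ℕ) (π : Equiv.Perm (Fin n)) : DTree n :=
  permTree n k ((List.finRange n).map π)


section Aux

open Fin.CommRing

open List in
lemma mem_tests_permTree {n : ℕ} (x : Fin n → Bool) (m : Fin n) :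
    ∀ (L : List (Fin n)) (k : ℕ),
      m ∈ (permTree n k L).tests x ↔
        m ∈ L ∧ (L.takeWhile (· ≠ m)).countP (fun i => !x i) < k := by
  intro L
  induction L with
  | nil => intro k; cases k <;> simp [permTree, DTree.tests]
  | cons i rest ih =>
    intro k
    cases k with
    | zero => simp [permTree, DTree.tests]
    | succ K =>
      simp only [permTree, DTree.tests]
      by_cases him : m = i
      · subst him
        simp [List.takeWhile_cons, Finset.mem_insert]
      · rw [Finset.mem_insert]
        have h1 : ((i :: rest).takeWhile (· ≠ m)) = i :: rest.takeWhile (· ≠ m) := by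
          rw [List.takeWhile_cons_of_pos]; simp only [ne_eq, decide_eq_true_eq]
          exact fun h => him h.symm
        rw [h1]
        by_cases hxi : x i
        · simp [hxi, him, ih, List.countP_cons, Ne.symm him, List.mem_cons]
        · have hxi' : x i = false := by simpa using hxi
          rw [hxi']
          simp only [if_neg (Bool.false_ne_true), ih, List.countP_cons, List.mem_cons]
          simp only [hxi', Bool.not_false, if_true]
          constructor
          · rintro (h | ⟨hm, hc⟩)
            · exact absurd h him
            · exact ⟨Or.inr hm, by omega⟩
          · rintro ⟨h | hm, hc⟩
            · exact absurd h him
            · exact Or.inr ⟨hm, by omega⟩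

lemma takeWhile_ne_finRange {n : ℕ} (a : Fin n) :
    (List.finRange n).takeWhile (· ≠ a) = (List.finRange n).take a.val := by
  rw [List.takeWhile_eq_take_findIdx_not]
  congr 1
  have h : (fun x : Fin n => !decide (x ≠ a)) = fun x => x == a := by
    funext x; by_cases h : x = a <;> simp [h]
  rw [h]
  simpa [List.idxOf] using List.idxOf_finRange a

lemma toFinset_take_finRange {n : ℕ} (d : ℕ) :
    ((List.finRange n).take d).toFinset = Finset.univ.filter (fun j : Fin n => j.val < d) := by
  ext j
  simp only [List.mem_toFinset, Finset.mem_filter, Finset.mem_univ, true_and]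
  constructor
  · intro h
    rw [List.mem_take_iff_getElem] at h
    obtain ⟨i, hi, he⟩ := h
    subst he
    simpa using (by omega : i < d)
  · intro h
    rw [List.mem_take_iff_getElem]
    exact ⟨j.val, by simp; omega, by simp⟩

lemma countP_eq_card {α : Type*} [DecidableEq α] {l : List α} (hl : l.Nodup) (p : α → Bool) :
    l.countP p = (l.toFinset.filter (fun a => p a)).card := by
  rw [← List.toFinset_filter, List.card_toFinset, (hl.filter p).dedup,
    List.countP_eq_length_filter]

lemma pr_congr {n : ℕ} (p : Fin n → ℝ) {E E' : (Fin n → Bool) → Prop}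
    (h : ∀ x, E x ↔ E' x) : pr p E = pr p E' := by
  unfold pr
  congr 1
  ext x
  simp [Finset.mem_filter, h]

open scoped Classical in
lemma wt_update {n : ℕ} (p : Fin n → ℝ) (x : Fin n → Bool) (j : Fin n) (hx : x j = false) :
    p j * wt p x = (1 - p j) * wt p (Function.update x j true) := by
  unfold wt
  have h1 : (fun i => if Function.update x j true i then p i else 1 - p i)
      = Function.update (fun i => if x i then p i else 1 - p i) j (p j) := by
    funext i
    by_cases h : i = j <;> simp [Function.update, h]
  rw [h1, Finset.prod_update_of_mem (Finset.mem_univ j),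
    ← Finset.mul_prod_erase Finset.univ _ (Finset.mem_univ j), hx]
  simp only [Bool.false_eq_true, if_false]
  rw [Finset.erase_eq]
  ring

open scoped Classical in
lemma pr_cond_false {n : ℕ} (p : Fin n → ℝ) (j : Fin n) (E : (Fin n → Bool) → Prop)
    (hE : ∀ x b, E (Function.update x j b) ↔ E x) :
    pr p (fun x => x j = false ∧ E x) = (1 - p j) * pr p E := by
  have hsplit : pr p E
      = pr p (fun x => x j = false ∧ E x) + pr p (fun x => x j = true ∧ E x) := by
    unfold pr
    rw [← Finset.sum_filter_add_sum_filter_not (Finset.univ.filter E) (fun x => x j = false)]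
    congr 1
    · congr 1; ext x; simp [Finset.mem_filter]; tauto
    · congr 1; ext x; simp [Finset.mem_filter]; tauto
  have hkey : p j * pr p (fun x => x j = false ∧ E x)
      = (1 - p j) * pr p (fun x => x j = true ∧ E x) := by
    unfold pr
    rw [Finset.mul_sum, Finset.mul_sum]
    refine Finset.sum_nbij' (fun x => Function.update x j true)
      (fun x => Function.update x j false) ?_ ?_ ?_ ?_ ?_
    · intro x hx
      simp only [Finset.mem_filter, Finset.mem_univ, true_and] at hx ⊢
      exact ⟨Function.update_self _ _ _, (hE x true).mpr hx.2⟩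
    · intro x hx
      simp only [Finset.mem_filter, Finset.mem_univ, true_and] at hx ⊢
      exact ⟨Function.update_self _ _ _, (hE x false).mpr hx.2⟩
    · intro x hx
      simp only [Finset.mem_filter, Finset.mem_univ, true_and] at hx
      funext i
      by_cases h : i = j
      · subst h; simp [Function.update_self, hx.1]
      · simp [Function.update_of_ne h]
    · intro x hx
      simp only [Finset.mem_filter, Finset.mem_univ, true_and] at hx
      funext i
      by_cases h : i = j
      · subst h; simp [Function.update_self, hx.1]
      · simp [Function.update_of_ne h]
    · intro x hx
      simp only [Finset.mem_filter, Finset.mem_univ, true_and] at hx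
      exact wt_update p x j hx.1
  rw [hsplit, mul_add, ← hkey]
  ring

lemma count_min : ∀ (n : ℕ) (k : ℕ) (Y : ℕ → Bool),
    ((Finset.range n).filter (fun r => Y r = false ∧
      (((Finset.range n).filter (fun ρ => r < ρ ∧ Y ρ = false)).card < k))).card
    = min (((Finset.range n).filter (fun r => Y r = false)).card) k := by
  intro n
  induction n with
  | zero => intro k Y; simp
  | succ n ih =>
    intro k Y
    have hnotmem : n ∉ Finset.range n := by simp
    rw [Finset.range_add_one]
    by_cases hYn : Y n = false
    · have hinner : ∀ r ∈ Finset.range n,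
          ((insert n (Finset.range n)).filter (fun ρ => r < ρ ∧ Y ρ = false)).card
          = ((Finset.range n).filter (fun ρ => r < ρ ∧ Y ρ = false)).card + 1 := by
        intro r hr
        rw [Finset.filter_insert, if_pos ⟨Finset.mem_range.mp hr, hYn⟩,
          Finset.card_insert_of_notMem (fun h => hnotmem (Finset.filter_subset _ _ h))]
      have hZ : ((insert n (Finset.range n)).filter (fun r => Y r = false)).card
          = ((Finset.range n).filter (fun r => Y r = false)).card + 1 := by
        rw [Finset.filter_insert, if_pos hYn,
          Finset.card_insert_of_notMem (fun h => hnotmem (Finset.filter_subset _ _ h))]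
      have hcn : ((insert n (Finset.range n)).filter
          (fun ρ => n < ρ ∧ Y ρ = false)).card = 0 := by
        rw [Finset.card_eq_zero, Finset.filter_eq_empty_iff]
        intro ρ hρ
        simp only [Finset.mem_insert, Finset.mem_range] at hρ
        rintro ⟨h1, -⟩; omega
      cases k with
      | zero =>
        rw [Finset.filter_insert, if_neg (by simp), Nat.min_zero,
          Finset.filter_eq_empty_iff.mpr (fun r hr => by simp)]
        simp
      | succ K =>
        rw [Finset.filter_insert, if_pos ⟨hYn, by rw [hcn]; omega⟩,
          Finset.card_insert_of_notMem (fun h => hnotmem (Finset.filter_subset _ _ h))]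
        have : (Finset.range n).filter (fun r => Y r = false ∧
            (((insert n (Finset.range n)).filter (fun ρ => r < ρ ∧ Y ρ = false)).card < K + 1))
          = (Finset.range n).filter (fun r => Y r = false ∧
            (((Finset.range n).filter (fun ρ => r < ρ ∧ Y ρ = false)).card < K)) := by
          apply Finset.filter_congr
          intro r hr
          rw [hinner r hr]
          constructor <;> (rintro ⟨h1, h2⟩; exact ⟨h1, by omega⟩)
        rw [this, ih K Y, hZ]
        omega
    · have hYn' : Y n = true := by revert hYn; cases Y n <;> simp
      have hinner : ∀ r ∈ Finset.range n,
          ((insert n (Finset.range n)).filter (fun ρ => r < ρ ∧ Y ρ = false)).card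
          = ((Finset.range n).filter (fun ρ => r < ρ ∧ Y ρ = false)).card := by
        intro r hr
        rw [Finset.filter_insert, if_neg (by simp [hYn'])]
      have hZ : ((insert n (Finset.range n)).filter (fun r => Y r = false)).card
          = ((Finset.range n).filter (fun r => Y r = false)).card := by
        rw [Finset.filter_insert, if_neg (by simp [hYn'])]
      rw [Finset.filter_insert, if_neg (by simp [hYn']), hZ, ← ih k Y]
      congr 1
      apply Finset.filter_congr
      intro r hr
      rw [hinner r hr]

open scoped Classical in
/-- The number of tests preceding `m` in the order starting at `s` that fail under `x`. -/
noncomputable def cnt {n : ℕ} (x : Fin n → Bool) (s m : Fin n) : ℕ :=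
  (Finset.univ.filter (fun j : Fin n => j.val < (m - s).val ∧ x (s + j) = false)).card

open scoped Classical in
lemma gprob_eq {n k : ℕ} [NeZero n] (p : Fin n → ℝ) (s m : Fin n) :
    gprob p (permStrat k (Equiv.addLeft s)) m = pr p (fun x => cnt x s m < k) := by
  unfold gprob permStrat
  apply pr_congr
  intro x
  rw [mem_tests_permTree]
  have hm : m ∈ (List.finRange n).map (Equiv.addLeft s) :=
    List.mem_map.mpr ⟨m - s, List.mem_finRange _, by simp⟩
  rw [List.takeWhile_map, List.countP_map]
  have hpred : ((fun i => decide (i ≠ m)) ∘ ⇑(Equiv.addLeft s))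
      = fun j : Fin n => decide (j ≠ m - s) := by
    funext j
    simp only [Function.comp_apply, Equiv.coe_addLeft, decide_eq_decide, ne_eq]
    constructor
    · intro h he; subst he; exact h (by ring)
    · intro h he; exact h (by rw [← he]; ring)
  have hcnt : List.countP ((fun i => !x i) ∘ ⇑(Equiv.addLeft s))
      (List.takeWhile ((fun i => decide (i ≠ m)) ∘ ⇑(Equiv.addLeft s)) (List.finRange n))
      = cnt x s m := by
    rw [hpred]
    have := takeWhile_ne_finRange (m - s)
    simp only [ne_eq] at this ⊢
    rw [this, countP_eq_card (((List.nodup_finRange n)).sublist (List.take_sublist _ _)),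
      toFinset_take_finRange, Finset.filter_filter, cnt]
    congr 1
    apply Finset.filter_congr
    intro j _
    simp [Equiv.coe_addLeft, Bool.not_eq_true']
  simp only [hm, true_and]
  rw [hcnt]


lemma add_one_ne_zero' {n : ℕ} [NeZero n] (a : Fin n) (h : a.val < n - 1) : a + 1 ≠ 0 := by
  intro h0
  have h1 : ((a + 1 : Fin n)).val = (0 : Fin n).val := congrArg Fin.val h0
  rw [Fin.val_add, Fin.val_one', Fin.val_zero] at h1
  have hn : 2 ≤ n := by omega
  rw [Nat.mod_eq_of_lt (show 1 < n by omega), Nat.mod_eq_of_lt (by omega)] at h1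
  omega

open scoped Classical in
lemma cnt_update {n : ℕ} [NeZero n] (x : Fin n → Bool) (s m : Fin n) (b : Bool) :
    cnt (Function.update x (s - 1) b) s m = cnt x s m := by
  unfold cnt
  congr 1
  apply Finset.filter_congr
  intro j _
  have hj : ∀ (hd : j.val < (m - s).val), s + j ≠ s - 1 := by
    intro hd he
    have h2 : s + (j + 1) = s + 0 := by rw [← add_assoc, he]; ring
    exact add_one_ne_zero' j (by have := (m - s).isLt; omega) (add_left_cancel h2)
  constructor
  · rintro ⟨hd, hx⟩
    exact ⟨hd, by rwa [Function.update_of_ne (hj hd)] at hx⟩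
  · rintro ⟨hd, hx⟩
    exact ⟨hd, by rwa [Function.update_of_ne (hj hd)]⟩

open scoped Classical in
lemma zeros_eq_card {n : ℕ} (x : Fin n → Bool) :
    zeros x = (Finset.univ.filter (fun i : Fin n => x i = false)).card := by
  unfold zeros
  rw [Finset.card_filter]
  apply Finset.sum_congr rfl
  intro i _
  cases h : x i <;> simp [h]

open scoped Classical in
lemma N_eq {n : ℕ} [NeZero n] (x : Fin n → Bool) (m : Fin n) (k : ℕ) :
    (Finset.univ.filter (fun s : Fin n => x (s - 1) = false ∧ cnt x s m < k)).card
    = min (zeros x) k := by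
  set Y : ℕ → Bool := fun r => x (m + (r : Fin n)) with hY
  have hcast : ∀ r : ℕ, r < n → ((r : Fin n)).val = r := fun r hr => Fin.val_cast_of_lt hr
  have hcnt : ∀ r : ℕ, r < n → cnt x (m + (r : Fin n) + 1) m
      = ((Finset.range n).filter (fun ρ => r < ρ ∧ Y ρ = false)).card := by
    intro r hr
    have hd : (m - (m + (r : Fin n) + 1)).val = n - 1 - r := by
      have h0 : ((r : Fin n) + 1) + ((n - 1 - r : ℕ) : Fin n) = 0 := by
        have h1 : ((r + 1 + (n - 1 - r) : ℕ) : Fin n) = ((n : ℕ) : Fin n) := by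
          congr 1; omega
        push_cast at h1
        rw [Fin.natCast_self] at h1
        linear_combination h1
      have h2 : m - (m + (r : Fin n) + 1) = -((r : Fin n) + 1) := by ring
      rw [h2, neg_eq_of_add_eq_zero_right h0, hcast _ (by omega)]
    unfold cnt
    refine Finset.card_nbij' (fun j => r + 1 + j.val) (fun ρ => ((ρ - r - 1 : ℕ) : Fin n))
      ?_ ?_ ?_ ?_
    · intro j hj
      simp only [Finset.mem_coe, Finset.mem_filter, Finset.mem_univ, true_and, hd] at hj
      simp only [Finset.mem_coe, Finset.mem_filter, Finset.mem_range]
      refine ⟨by omega, by omega, ?_⟩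
      rw [hY]
      have harg : m + ((r + 1 + j.val : ℕ) : Fin n) = m + (r : Fin n) + 1 + j := by
        push_cast
        ring
      simp only []
      rw [harg]
      exact hj.2
    · intro ρ hρ
      simp only [Finset.mem_coe, Finset.mem_filter, Finset.mem_range] at hρ
      simp only [Finset.mem_coe, Finset.mem_filter, Finset.mem_univ, true_and, hd]
      refine ⟨by rw [hcast _ (by omega)]; omega, ?_⟩
      have h1 : ((r + 1 + (ρ - r - 1) : ℕ) : Fin n) = ((ρ : ℕ) : Fin n) := by
        congr 1; omega
      push_cast at h1
      have harg : m + (r : Fin n) + 1 + ((ρ - r - 1 : ℕ) : Fin n) = m + ((ρ : ℕ) : Fin n) := by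
        linear_combination h1
      show x (m + (r : Fin n) + 1 + ((ρ - r - 1 : ℕ) : Fin n)) = false
      rw [harg]
      exact hρ.2.2
    · intro j hj
      simp only [Finset.mem_coe, Finset.mem_filter, Finset.mem_univ, true_and, hd] at hj
      show ((r + 1 + j.val - r - 1 : ℕ) : Fin n) = j
      have : r + 1 + j.val - r - 1 = j.val := by omega
      rw [this, Fin.cast_val_eq_self]
    · intro ρ hρ
      simp only [Finset.mem_coe, Finset.mem_filter, Finset.mem_range] at hρ
      show r + 1 + (((ρ - r - 1 : ℕ) : Fin n)).val = ρ
      rw [hcast _ (by omega)]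
      omega
  rw [zeros_eq_card]
  have hmain : (Finset.univ.filter (fun s : Fin n => x (s - 1) = false ∧ cnt x s m < k)).card
      = ((Finset.range n).filter (fun r => Y r = false ∧
          (((Finset.range n).filter (fun ρ => r < ρ ∧ Y ρ = false)).card < k))).card := by
    refine Finset.card_nbij' (fun s => (s - 1 - m).val) (fun r => m + (r : Fin n) + 1)
      ?_ ?_ ?_ ?_
    · intro s hs
      simp only [Finset.mem_coe, Finset.mem_filter, Finset.mem_univ, true_and] at hs
      simp only [Finset.mem_coe, Finset.mem_filter, Finset.mem_range]
      have he : m + (((s - 1 - m).val : ℕ) : Fin n) = s - 1 := by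
        rw [Fin.cast_val_eq_self]; ring
      have he2 : m + (((s - 1 - m).val : ℕ) : Fin n) + 1 = s := by rw [he]; ring
      refine ⟨(s - 1 - m).isLt, ?_, ?_⟩
      · show x (m + _) = false
        rw [he]; exact hs.1
      · rw [← hcnt _ (s - 1 - m).isLt, he2]; exact hs.2
    · intro r hr
      simp only [Finset.mem_coe, Finset.mem_filter, Finset.mem_range] at hr
      simp only [Finset.mem_coe, Finset.mem_filter, Finset.mem_univ, true_and]
      constructor
      · have : m + (r : Fin n) + 1 - 1 = m + (r : Fin n) := by ring
        rw [this]; exact hr.2.1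
      · rw [hcnt _ hr.1]; exact hr.2.2
    · intro s _
      have : m + ((s - 1 - m).val : Fin n) + 1 = s := by
        rw [Fin.cast_val_eq_self]; ring
      exact this
    · intro r hr
      simp only [Finset.mem_coe, Finset.mem_filter, Finset.mem_range] at hr
      show (m + (r : Fin n) + 1 - 1 - m).val = r
      have : m + (r : Fin n) + 1 - 1 - m = (r : Fin n) := by ring
      rw [this, hcast _ hr.1]
  rw [hmain, count_min n k Y]
  congr 1
  refine Finset.card_nbij' (fun r => m + (r : Fin n)) (fun i => ((i - m).val : ℕ))
    ?_ ?_ ?_ ?_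
  · intro r hr
    simp only [Finset.mem_coe, Finset.mem_filter, Finset.mem_range] at hr
    simp only [Finset.mem_coe, Finset.mem_filter, Finset.mem_univ, true_and]
    exact hr.2
  · intro i hi
    simp only [Finset.mem_coe, Finset.mem_filter, Finset.mem_univ, true_and] at hi
    simp only [Finset.mem_coe, Finset.mem_filter, Finset.mem_range]
    refine ⟨(i - m).isLt, ?_⟩
    show x (m + (((i - m).val : ℕ) : Fin n)) = false
    rw [Fin.cast_val_eq_self]
    have : m + (i - m) = i := by ring
    rw [this]; exact hi
  · intro r hr
    simp only [Finset.mem_coe, Finset.mem_filter, Finset.mem_range] at hr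
    show (m + (r : Fin n) - m).val = r
    have : m + (r : Fin n) - m = (r : Fin n) := by ring
    rw [this, hcast _ hr.1]
  · intro i _
    show m + (((i - m).val : ℕ) : Fin n) = i
    rw [Fin.cast_val_eq_self]
    ring

end Aux

/-- Distributing `t` units of flow among the `n` cyclic-shift conservative strategies,
with fraction `(1-p_{i-1})/∑ⱼ(1-pⱼ)` on the shift starting at `i` (indices cyclic),
loads every processor by exactly `t·α/∑ⱼ(1-pⱼ)`, where `α = ∑_{t'=1}^k P(Z ≥ t')`. -/
theorem stmt_7 (n k : ℕ) [NeZero n] (hk : 1 ≤ k) (p : Fin n → ℝ)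
    (hp : ∀ i, 0 < p i ∧ p i < 1) (t : ℝ) (ht : 0 ≤ t) :
    ∀ m : Fin n,
      ∑ s : Fin n, (t * (1 - p (s - 1)) / ∑ j, (1 - p j)) *
          gprob p (permStrat k (Equiv.addLeft s)) m
        = t * (∑ t' ∈ Finset.Icc 1 k, pr p (fun x => t' ≤ zeros x)) / ∑ j, (1 - p j) := by
  intro m
  classical
  have h1 : ∀ (E : (Fin n → Bool) → Prop),
      pr p E = ∑ x : Fin n → Bool, if E x then wt p x else 0 := by
    intro E
    rw [pr]
    exact Finset.sum_filter _ _
  have h2 : ∀ (α : Type) [Fintype α] (G : α → Prop) (c : ℝ),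
      ∑ s : α, (if G s then c else 0) = c * (Finset.univ.filter G).card := by
    intro α _ G c
    rw [← Finset.sum_filter, Finset.sum_const, nsmul_eq_mul, mul_comm]
  have key : ∀ s : Fin n, (1 - p (s - 1)) * gprob p (permStrat k (Equiv.addLeft s)) m
      = pr p (fun x => x (s - 1) = false ∧ cnt x s m < k) := by
    intro s
    rw [gprob_eq p s m, pr_cond_false p (s - 1) (fun x => cnt x s m < k)
      (fun x b => by simp only [cnt_update])]
  have hsum : ∑ s : Fin n, pr p (fun x => x (s - 1) = false ∧ cnt x s m < k)
      = ∑ x : Fin n → Bool, wt p x * ((min (zeros x) k : ℕ) : ℝ) := by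
    simp only [h1]
    rw [Finset.sum_comm]
    apply Finset.sum_congr rfl
    intro x _
    rw [h2 (Fin n) (fun s => x (s - 1) = false ∧ cnt x s m < k) (wt p x)]
    congr 2
    rw [← N_eq x m k]
    congr 1
    congr!
  have hrhs : ∑ t' ∈ Finset.Icc 1 k, pr p (fun x => t' ≤ zeros x)
      = ∑ x : Fin n → Bool, wt p x * ((min (zeros x) k : ℕ) : ℝ) := by
    simp only [h1]
    rw [Finset.sum_comm]
    apply Finset.sum_congr rfl
    intro x _
    have h3 : ∀ (G : ℕ → Prop) (c : ℝ),
        ∑ t' ∈ Finset.Icc 1 k, (if G t' then c else 0)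
          = c * ((Finset.Icc 1 k).filter G).card := by
      intro G c
      rw [← Finset.sum_filter, Finset.sum_const, nsmul_eq_mul, mul_comm]
    rw [h3 (fun t' => t' ≤ zeros x) (wt p x)]
    congr 2
    have he : (Finset.Icc 1 k).filter (fun t' => t' ≤ zeros x)
        = Finset.Icc 1 (min k (zeros x)) := by
      ext t'
      simp only [Finset.mem_filter, Finset.mem_Icc]
      omega
    have hc : (Finset.Icc 1 (min k (zeros x))).card = zeros x ⊓ k := by
      rw [Nat.card_Icc]; omega
    rw [← hc]
    convert congrArg Finset.card he using 2
    congr!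
  have hmid : ∑ s : Fin n, (1 - p (s - 1)) * gprob p (permStrat k (Equiv.addLeft s)) m
      = ∑ t' ∈ Finset.Icc 1 k, pr p (fun x => t' ≤ zeros x) := by
    simp only [key]
    rw [hsum, ← hrhs]
  calc ∑ s : Fin n, (t * (1 - p (s - 1)) / ∑ j, (1 - p j)) *
        gprob p (permStrat k (Equiv.addLeft s)) m
      = (t / ∑ j, (1 - p j)) *
        ∑ s : Fin n, (1 - p (s - 1)) * gprob p (permStrat k (Equiv.addLeft s)) m := by
        rw [Finset.mul_sum]
        exact Finset.sum_congr rfl fun s _ => by ring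
    _ = (t / ∑ j, (1 - p j)) * ∑ t' ∈ Finset.Icc 1 k, pr p (fun x => t' ≤ zeros x) := by
        rw [hmid]
    _ = t * (∑ t' ∈ Finset.Icc 1 k, pr p (fun x => t' ≤ zeros x)) / ∑ j, (1 - p j) := by
        ring
end

section
/- Consider a sequence of n-1 merges of disjoint sets (megaprocessors), starting from n singletons, where the i-th merge combines two current sets A_i, B_i into A_i ∪ B_i. Charge to each element of the smaller of A_i, B_i the amount min(v+1, min(|A_i|,|B_i|)+1)/min(|A_i|,|B_i|) at merge i (for a fixed parameter v ≥ 0). Then the total charge accumulated by any single element over all merges is O(1), i.e., bounded by an absolute constant (at most 10). -/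
open Finset

/-- The charging argument of Lemma 4: in a sequence of `m` merges of disjoint sets starting
from singletons (`comp i a` is the set currently containing `a` before merge `i`; merge `i`
combines the current sets `A i` and `B i`), charging each element of the smaller merged set
the amount `min(v+1, s+1)/s` (where `s = min(|Aᵢ|,|Bᵢ|)`, and charges occur only when the
convolution for `v` has nonzero cost, i.e. `v ≤ |Aᵢ| + |Bᵢ|`), the total charge accumulated
by any single element is bounded by the absolute constant `10`. -/
theorem stmt_10 {α : Type*} [DecidableEq α] (m v : ℕ)
    (comp : ℕ → α → Finset α) (A B : ℕ → Finset α)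
    (hself : ∀ i a, a ∈ comp i a)
    (h0 : ∀ a, comp 0 a = {a})
    (hA : ∀ i < m, ∃ a, comp i a = A i)
    (hB : ∀ i < m, ∃ a, comp i a = B i)
    (hdisj : ∀ i < m, Disjoint (A i) (B i))
    (hstep : ∀ i < m, ∀ a, comp (i + 1) a =
      if comp i a = A i ∨ comp i a = B i then A i ∪ B i else comp i a)
    (a : α) :
    ∑ i ∈ Finset.range m,
        (if comp i a = (if (A i).card ≤ (B i).card then A i else B i)
            ∧ v ≤ (A i).card + (B i).card
          then (min (v + 1) (min (A i).card (B i).card + 1) : ℝ) /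
            (min (A i).card (B i).card : ℝ)
          else 0)
      ≤ 10 := by
  set f : ℕ → ℝ := fun i =>
    (if comp i a = (if (A i).card ≤ (B i).card then A i else B i)
        ∧ v ≤ (A i).card + (B i).card
      then (min (v + 1) (min (A i).card (B i).card + 1) : ℝ) /
        (min (A i).card (B i).card : ℝ)
      else 0) with hf
  have hc1 : ∀ i, 1 ≤ (comp i a).card := fun i =>
    Finset.card_pos.mpr ⟨a, hself i a⟩
  have hmono : ∀ i < m, (comp i a).card ≤ (comp (i+1) a).card := by
    intro i hi
    rw [hstep i hi a]
    split_ifs with h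
    · rcases h with h | h
      · rw [h]; exact Finset.card_le_card Finset.subset_union_left
      · rw [h]; exact Finset.card_le_card Finset.subset_union_right
    · exact le_rfl
  have key : ∀ k, k ≤ m → (∑ i ∈ Finset.range k, f i = 0) ∨
      ((∑ i ∈ Finset.range k, f i) + 2*((v:ℝ)+1)/((comp k a).card : ℝ) ≤ 5 ∧
        (v:ℝ) ≤ ((comp k a).card : ℝ) ∧ (2:ℝ) ≤ ((comp k a).card : ℝ)) := by
    intro k
    induction k with
    | zero => intro _; left; simp
    | succ k ih =>
      intro hk1
      have hkm : k < m := hk1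
      have ih' := ih (le_of_lt hkm)
      have hcpos : (0:ℝ) < ((comp k a).card : ℝ) := by
        exact_mod_cast hc1 k
      have hdpos : (0:ℝ) < ((comp (k+1) a).card : ℝ) := by
        exact_mod_cast hc1 (k+1)
      rw [Finset.sum_range_succ]
      by_cases hch : comp k a = (if (A k).card ≤ (B k).card then A k else B k)
          ∧ v ≤ (A k).card + (B k).card
      · -- charged at step k
        have hsk : min (A k).card (B k).card = (comp k a).card := by
          rw [hch.1]; split_ifs with h <;> omega
        have hAB : comp k a = A k ∨ comp k a = B k := by
          rw [hch.1]; split_ifs <;> simp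
        have hcs : comp (k+1) a = A k ∪ B k := by
          rw [hstep k hkm a, if_pos hAB]
        have hcard1 : (comp (k+1) a).card = (A k).card + (B k).card := by
          rw [hcs, Finset.card_union_of_disjoint (hdisj k hkm)]
        have hdouble : 2 * (comp k a).card ≤ (comp (k+1) a).card := by
          rw [hcard1, ← hsk]; omega
        have hv1 : v ≤ (comp (k+1) a).card := by rw [hcard1]; exact hch.2
        have h2n : 2 ≤ (comp (k+1) a).card := by have := hc1 k; omega
        have hfk : f k = (min ((v:ℝ) + 1) (((comp k a).card : ℝ) + 1)) /
            ((comp k a).card : ℝ) := by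
          simp only [hf]
          rw [if_pos hch, ← Nat.cast_min, hsk]
        have hN1 : (min ((v:ℝ) + 1) (((comp k a).card : ℝ) + 1)) ≤ (v:ℝ) + 1 :=
          min_le_left _ _
        have hN2 : (min ((v:ℝ) + 1) (((comp k a).card : ℝ) + 1)) ≤
            ((comp k a).card : ℝ) + 1 :=
          min_le_right _ _
        have hdoubleR : 2 * ((comp k a).card : ℝ) ≤ ((comp (k+1) a).card : ℝ) := by
          exact_mod_cast hdouble
        have hv1R : (v:ℝ) ≤ ((comp (k+1) a).card : ℝ) := by exact_mod_cast hv1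
        have h2R : (2:ℝ) ≤ ((comp (k+1) a).card : ℝ) := by exact_mod_cast h2n
        have hc1R : (1:ℝ) ≤ ((comp k a).card : ℝ) := by exact_mod_cast hc1 k
        rcases ih' with h0' | ⟨hs, hv', _⟩
        · right
          refine ⟨?_, hv1R, h2R⟩
          rw [h0', zero_add, hfk]
          have hb1 : (min ((v:ℝ) + 1) (((comp k a).card : ℝ) + 1)) /
              ((comp k a).card : ℝ) ≤ 2 := by
            rw [div_le_iff₀ hcpos]; nlinarith
          have hb2 : 2*((v:ℝ)+1)/((comp (k+1) a).card : ℝ) ≤ 3 := by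
            rw [div_le_iff₀ hdpos]; nlinarith
          linarith
        · right
          refine ⟨?_, hv1R, h2R⟩
          have hb1 : f k ≤ ((v:ℝ)+1) / ((comp k a).card : ℝ) := by
            rw [hfk, div_le_div_iff₀ hcpos hcpos]; nlinarith
          have hb2 : 2*((v:ℝ)+1)/((comp (k+1) a).card : ℝ) ≤
              ((v:ℝ)+1) / ((comp k a).card : ℝ) := by
            rw [div_le_div_iff₀ hdpos hcpos]; nlinarith
          have hsplit : 2*((v:ℝ)+1)/((comp k a).card : ℝ) =
              ((v:ℝ)+1)/((comp k a).card : ℝ) + ((v:ℝ)+1)/((comp k a).card : ℝ) := by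
            ring
          linarith
      · -- not charged at step k
        have hfk : f k = 0 := by simp only [hf]; rw [if_neg hch]
        rw [hfk, add_zero]
        rcases ih' with h0' | ⟨hs, hv', h2'⟩
        · left; exact h0'
        · right
          have hmR : ((comp k a).card : ℝ) ≤ ((comp (k+1) a).card : ℝ) := by
            exact_mod_cast hmono k hkm
          refine ⟨?_, le_trans hv' hmR, le_trans h2' hmR⟩
          have : 2*((v:ℝ)+1)/((comp (k+1) a).card : ℝ) ≤
              2*((v:ℝ)+1)/((comp k a).card : ℝ) := by
            rw [div_le_div_iff₀ hdpos hcpos]; nlinarith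
          linarith
  rcases key m le_rfl with h | ⟨hs, _, _⟩
  · rw [h]; norm_num
  · have : 0 ≤ 2*((v:ℝ)+1)/((comp m a).card : ℝ) := by positivity
    linarith
end

section
/- For the min-cost 1-of-n testing problem with independent pass probabilities p_i ∈ (0,1) and costs c_i > 0, the permutation ordering tests in increasing order of c_i/(1-p_i) minimizes the expected cost ∑_{j=1}^n c_{π(j)}·∏_{ℓ<j} p_{π(ℓ)} over all permutations π. -/
open Finset

section Aux

variable {n : ℕ} (p c : Fin n → ℝ)

/-- Expected cost of testing in list order. -/
noncomputable def ecost : List (Fin n) → ℝ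
  | [] => 0
  | a :: t => c a + p a * ecost t

lemma ecost_swap (hp : ∀ i, 0 < p i ∧ p i < 1) (a b : Fin n) (t : List (Fin n))
    (hr : c b / (1 - p b) ≤ c a / (1 - p a)) :
    ecost p c (b :: a :: t) ≤ ecost p c (a :: b :: t) := by
  have ha : 0 < 1 - p a := by linarith [(hp a).2]
  have hb : 0 < 1 - p b := by linarith [(hp b).2]
  have h := (div_le_div_iff₀ hb ha).mp hr
  simp only [ecost]
  nlinarith

lemma ecost_min_front (hp : ∀ i, 0 < p i ∧ p i < 1) (b : Fin n) : ∀ (l : List (Fin n)), b ∈ l →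
    (∀ x ∈ l, c b / (1 - p b) ≤ c x / (1 - p x)) →
    ecost p c (b :: l.erase b) ≤ ecost p c l := by
  intro l
  induction l with
  | nil => intro h; simp at h
  | cons a t ih =>
    intro hb hmin
    by_cases hab : a = b
    · subst hab; simp [List.erase_cons_head]
    · have hbt : b ∈ t := by
        rcases List.mem_cons.mp hb with h | h
        · exact absurd h.symm hab
        · exact h
      rw [List.erase_cons_tail (by simpa using hab)]
      have h1 : ecost p c (b :: t.erase b) ≤ ecost p c t :=
        ih hbt (fun x hx => hmin x (List.mem_cons_of_mem _ hx))
      have h2 : ecost p c (a :: b :: t.erase b) ≤ ecost p c (a :: t) := by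
        simp only [ecost] at h1 ⊢
        have := (hp a).1
        nlinarith
      have h3 : ecost p c (b :: a :: t.erase b) ≤ ecost p c (a :: b :: t.erase b) :=
        ecost_swap p c hp a b _ (hmin a List.mem_cons_self)
      linarith
  
lemma ecost_sorted_min (hp : ∀ i, 0 < p i ∧ p i < 1) : ∀ (l l' : List (Fin n)),
    l.Pairwise (fun x y => c x / (1 - p x) ≤ c y / (1 - p y)) → l.Perm l' →
    ecost p c l ≤ ecost p c l' := by
  intro l
  induction l with
  | nil => intro l' _ hperm; rw [hperm.nil_eq]
  | cons b t ih =>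
    intro l' hsorted hperm
    have hb : b ∈ l' := hperm.mem_iff.mp List.mem_cons_self
    have hmin : ∀ x ∈ l', c b / (1 - p b) ≤ c x / (1 - p x) := by
      intro x hx
      rcases List.mem_cons.mp (hperm.symm.mem_iff.mp hx) with h | h
      · subst h; exact le_rfl
      · exact (List.pairwise_cons.mp hsorted).1 x h
    have h1 : ecost p c (b :: l'.erase b) ≤ ecost p c l' :=
      ecost_min_front p c hp b l' hb hmin
    have hperm' : t.Perm (l'.erase b) := by
      have := hperm.trans (List.perm_cons_erase hb)
      exact this.cons_inv
    have h2 : ecost p c t ≤ ecost p c (l'.erase b) :=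
      ih (l'.erase b) (List.pairwise_cons.mp hsorted).2 hperm'
    have := (hp b).1
    simp only [ecost] at *
    nlinarith

lemma ecost_eq_sum : ∀ (k : ℕ) (f : Fin k → Fin n),
    ∑ j : Fin k, c (f j) * ∏ ℓ ∈ Finset.univ.filter (fun ℓ => ℓ < j), p (f ℓ)
      = ecost p c (List.ofFn f) := by
  intro k
  induction k with
  | zero => intro f; simp [ecost]
  | succ m ih =>
    intro f
    rw [Fin.sum_univ_succ, List.ofFn_succ, ecost]
    congr 1
    · simp
    · rw [← ih (fun i => f i.succ), Finset.mul_sum]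
      apply Finset.sum_congr rfl
      intro i _
      rw [Finset.prod_filter, Finset.prod_filter, Fin.prod_univ_succ]
      simp only [Function.comp_apply, Fin.succ_lt_succ_iff, Fin.succ_pos, if_true]
      ring

end Aux

/-- Ratio rule for min-cost 1-of-n testing: ordering tests by nondecreasing `cᵢ/(1-pᵢ)`
minimizes the expected cost `∑ⱼ c_{π(j)} ∏_{ℓ<j} p_{π(ℓ)}` over all permutations. -/
theorem stmt_12 (n : ℕ) (p c : Fin n → ℝ)
    (hp : ∀ i, 0 < p i ∧ p i < 1) (hc : ∀ i, 0 < c i)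
    (π : Equiv.Perm (Fin n))
    (hsort : ∀ i j : Fin n, i ≤ j →
      c (π i) / (1 - p (π i)) ≤ c (π j) / (1 - p (π j))) :
    ∀ σ : Equiv.Perm (Fin n),
      ∑ j : Fin n, c (π j) * ∏ ℓ ∈ Finset.univ.filter (fun ℓ => ℓ < j), p (π ℓ)
        ≤ ∑ j : Fin n, c (σ j) * ∏ ℓ ∈ Finset.univ.filter (fun ℓ => ℓ < j), p (σ ℓ) := by
  intro σ
  rw [ecost_eq_sum p c n π, ecost_eq_sum p c n σ]
  apply ecost_sorted_min p c hp
  · -- sortedness of ofFn π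
    rw [List.pairwise_iff_get]
    intro i j hij
    simp only [List.get_ofFn]
    exact hsort _ _ (le_of_lt (by simpa using hij))
  · -- ofFn π ~ ofFn σ
    have key : ∀ τ : Equiv.Perm (Fin n), (List.ofFn (⇑τ)).Perm (List.finRange n) := by
      intro τ
      rw [List.ofFn_eq_map]
      apply List.perm_of_nodup_nodup_toFinset_eq
      · exact (List.nodup_finRange n).map τ.injective
      · exact List.nodup_finRange n
      · ext x
        simp only [List.mem_toFinset, List.mem_map, List.mem_finRange, true_and]
        exact ⟨fun _ => trivial, fun _ => ⟨τ.symm x, by simp⟩⟩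
    exact (key π).trans (key σ).symm
end
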